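/- Let β : (0,∞) → ℝ be C¹ such that t ↦ β'(t)/t is non-increasing on (0,∞) and bounded below by a positive constant. Let C₁, C₃ > 0, C₄ ≥ 0, C₂ ∈ ℝ, and p ≥ 3. Then the function g(t) = C₁β(t) + C₂t⁴ - C₃ t⁴ log t - C₄ t^{2p-2} has a unique critical point t₀ ∈ (0,∞), and g'(t) > 0 for t < t₀ while g'(t) < 0 for t > t₀. -/

import Mathlib

theorem stmt_6 (β β' : ℝ → ℝ) (C₁ C₂ C₃ C₄ p : ℝ)
    (hβ : ∀ t ∈ Set.Ioi (0 : ℝ), HasDerivAt β (β' t) t)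
    (hβ'cont : ContinuousOn β' (Set.Ioi (0 : ℝ)))
    (hβ'mono : AntitoneOn (fun t => β' t / t) (Set.Ioi (0 : ℝ)))
    (hβ'lb : ∃ m > (0 : ℝ), ∀ t ∈ Set.Ioi (0 : ℝ), m ≤ β' t / t)
    (hC₁ : 0 < C₁) (hC₃ : 0 < C₃) (hC₄ : 0 ≤ C₄) (hp : 3 ≤ p) :
    ∃ t₀ : ℝ, 0 < t₀ ∧
      deriv (fun t : ℝ => C₁ * β t + C₂ * t ^ 4 - C₃ * t ^ 4 * Real.log t
        - C₄ * t ^ (2 * p - 2)) t₀ = 0 ∧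
      (∀ t : ℝ, 0 < t → t < t₀ →
        0 < deriv (fun t : ℝ => C₁ * β t + C₂ * t ^ 4 - C₃ * t ^ 4 * Real.log t
          - C₄ * t ^ (2 * p - 2)) t) ∧
      (∀ t : ℝ, t₀ < t →
        deriv (fun t : ℝ => C₁ * β t + C₂ * t ^ 4 - C₃ * t ^ 4 * Real.log t
          - C₄ * t ^ (2 * p - 2)) t < 0) := by
  obtain ⟨m, hm, hmle⟩ := hβ'lb
  set q : ℝ := 2 * p - 6 with hq
  have hq0 : (0:ℝ) ≤ q := by rw [hq]; linarith
  have hc4 : (0:ℝ) ≤ C₄ * (2 * p - 2) := by nlinarith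
  set h : ℝ → ℝ := fun t => C₁ * (β' t / t) / t ^ 2 + (4 * C₂ - C₃)
      - 4 * C₃ * Real.log t - C₄ * (2 * p - 2) * t ^ q with hhdef
  -- derivative computation
  have key : ∀ t : ℝ, 0 < t → HasDerivAt (fun t : ℝ => C₁ * β t + C₂ * t ^ 4
      - C₃ * t ^ 4 * Real.log t - C₄ * t ^ (2 * p - 2)) (t ^ 3 * h t) t := by
    intro t ht0
    have hne : t ≠ 0 := ne_of_gt ht0
    have h1 := (hβ t ht0).const_mul C₁
    have h2 := (hasDerivAt_pow 4 t).const_mul C₂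
    have h3 : HasDerivAt (fun x : ℝ => C₃ * x ^ 4 * Real.log x)
        ((C₃ * ((4:ℕ) * t ^ 3)) * Real.log t + (C₃ * t ^ 4) * t⁻¹) t := by
      exact ((hasDerivAt_pow 4 t).const_mul C₃).mul (Real.hasDerivAt_log hne)
    have h4 := (Real.hasDerivAt_rpow_const (p := 2 * p - 2) (Or.inl hne)).const_mul C₄
    have hsum := ((h1.add h2).sub h3).sub h4
    refine hsum.congr_deriv ?_
    have e2 : t ^ (2 * p - 2 - 1) = t ^ (3:ℕ) * t ^ q := by
      rw [← Real.rpow_natCast t 3, ← Real.rpow_add ht0]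
      congr 1
      push_cast
      ring
    simp only [hhdef]
    rw [e2]
    field_simp
    ring
  -- strict antitonicity of h
  have hanti : StrictAntiOn h (Set.Ioi (0:ℝ)) := by
    intro a ha b hb hab
    have ha0 : (0:ℝ) < a := ha
    have hb0 : (0:ℝ) < b := hb
    have hba : β' b / b ≤ β' a / a := hβ'mono ha hb hab.le
    have hma : m ≤ β' a / a := hmle a ha
    have hmb : m ≤ β' b / b := hmle b hb
    have h1 : C₁ * (β' b / b) / b ^ 2 ≤ C₁ * (β' a / a) / a ^ 2 := by
      apply div_le_div₀ (by nlinarith) (by nlinarith) (by positivity) (by nlinarith)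
    have h2 : Real.log a < Real.log b := Real.log_lt_log ha0 hab
    have h3 : a ^ q ≤ b ^ q := Real.rpow_le_rpow ha0.le hab.le hq0
    have h4 : C₄ * (2 * p - 2) * a ^ q ≤ C₄ * (2 * p - 2) * b ^ q :=
      mul_le_mul_of_nonneg_left h3 hc4
    simp only [hhdef]
    nlinarith
  -- continuity of h
  have hcont : ContinuousOn h (Set.Ioi (0:ℝ)) := by
    simp only [hhdef]
    apply ContinuousOn.sub
    apply ContinuousOn.sub
    apply ContinuousOn.add
    · exact (continuousOn_const.mul (hβ'cont.div continuousOn_id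
        (fun t ht => ne_of_gt (Set.mem_Ioi.mp ht)))).div
        ((continuous_pow 2).continuousOn) (fun t ht => by
          have := Set.mem_Ioi.mp ht; positivity)
    · exact continuousOn_const
    · exact continuousOn_const.mul (Real.continuousOn_log.mono
        (fun t ht => (Set.mem_Ioi.mp ht).ne'))
    · exact continuousOn_const.mul (ContinuousOn.rpow_const continuousOn_id
        (fun t ht => Or.inl (Set.mem_Ioi.mp ht).ne'))
  -- endpoint a with h a > 0
  set K : ℝ := (|4 * C₂ - C₃| + C₄ * (2 * p - 2) + 1) / (4 * C₃) with hK
  have hKpos : 0 < K := by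
    apply div_pos _ (by linarith)
    have := abs_nonneg (4 * C₂ - C₃)
    linarith
  set a : ℝ := Real.exp (-K) with hadef
  have ha0 : 0 < a := Real.exp_pos _
  have ha1 : a ≤ 1 := by
    rw [hadef]
    exact Real.exp_le_one_iff.mpr (by linarith)
  have hha : 0 < h a := by
    have hma : m ≤ β' a / a := hmle a ha0
    have t1 : 0 ≤ C₁ * (β' a / a) / a ^ 2 := by
      apply div_nonneg (mul_nonneg hC₁.le (by linarith)) (by positivity)
    have t2 : Real.log a = -K := by rw [hadef, Real.log_exp]
    have t3 : a ^ q ≤ 1 := Real.rpow_le_one ha0.le ha1 hq0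
    have t4 : C₄ * (2 * p - 2) * a ^ q ≤ C₄ * (2 * p - 2) := by nlinarith
    have habs : -|4 * C₂ - C₃| ≤ 4 * C₂ - C₃ := neg_abs_le _
    have hKe : 4 * C₃ * K = |4 * C₂ - C₃| + C₄ * (2 * p - 2) + 1 := by
      rw [hK]; field_simp
    simp only [hhdef]
    rw [t2]
    nlinarith
  -- endpoint b with h b < 0
  set K' : ℝ := (C₁ * |β' 1| + |4 * C₂ - C₃| + 1) / (4 * C₃) with hK'
  have hK'pos : 0 < K' := by
    apply div_pos _ (by linarith)
    have := abs_nonneg (β' 1)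
    have := abs_nonneg (4 * C₂ - C₃)
    nlinarith
  set b : ℝ := Real.exp K' with hbdef
  have hb0 : 0 < b := Real.exp_pos _
  have hb1 : 1 < b := by
    rw [hbdef]
    calc (1:ℝ) = Real.exp 0 := by rw [Real.exp_zero]
    _ < Real.exp K' := Real.exp_lt_exp.mpr hK'pos
  have hhb : h b < 0 := by
    have hb2 : β' b / b ≤ β' 1 / 1 := hβ'mono (Set.mem_Ioi.mpr one_pos)
      (Set.mem_Ioi.mpr hb0) hb1.le
    have hmb : 0 < β' b / b := lt_of_lt_of_le hm (hmle b hb0)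
    have t1 : C₁ * (β' b / b) / b ^ 2 ≤ C₁ * |β' 1| := by
      have s1 : C₁ * (β' b / b) / b ^ 2 ≤ C₁ * (β' b / b) :=
        div_le_self (by positivity) (by nlinarith)
      have s0 : β' b / b ≤ |β' 1| := le_trans (by simpa using hb2) (le_abs_self _)
      nlinarith
    have t2 : Real.log b = K' := by rw [hbdef, Real.log_exp]
    have t3 : 0 ≤ C₄ * (2 * p - 2) * b ^ q :=
      mul_nonneg hc4 (Real.rpow_nonneg hb0.le q)
    have hKe : 4 * C₃ * K' = C₁ * |β' 1| + |4 * C₂ - C₃| + 1 := by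
      rw [hK']; field_simp
    have habs : 4 * C₂ - C₃ ≤ |4 * C₂ - C₃| := le_abs_self _
    simp only [hhdef]
    rw [t2]
    linarith
  have hab : a < b := lt_of_le_of_lt ha1 hb1
  have hsub : Set.Icc a b ⊆ Set.Ioi (0:ℝ) := fun x hx => lt_of_lt_of_le ha0 hx.1
  obtain ⟨t₀, ht₀mem, ht₀⟩ := intermediate_value_Icc' hab.le (hcont.mono hsub)
    (Set.mem_Icc.mpr ⟨hhb.le, hha.le⟩)
  have ht₀pos : 0 < t₀ := lt_of_lt_of_le ha0 ht₀mem.1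
  refine ⟨t₀, ht₀pos, ?_, ?_, ?_⟩
  · rw [(key t₀ ht₀pos).deriv, ht₀, mul_zero]
  · intro t ht htlt
    rw [(key t ht).deriv]
    have hlt : h t₀ < h t := hanti (Set.mem_Ioi.mpr ht) (Set.mem_Ioi.mpr ht₀pos) htlt
    rw [ht₀] at hlt
    exact mul_pos (by positivity) hlt
  · intro t htgt
    have ht : 0 < t := lt_trans ht₀pos htgt
    rw [(key t ht).deriv]
    have hlt : h t < h t₀ := hanti (Set.mem_Ioi.mpr ht₀pos) (Set.mem_Ioi.mpr ht) htgt
    rw [ht₀] at hlt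
    exact mul_neg_of_pos_of_neg (by positivity) hlt
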